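/- Let 0 < s₁ ≤ s₂ and α ≥ (1+s₁)/(1+s₂). With I₁, I₂ the Poisson mutual information functions (gains α, 1; dark currents s₁, s₂), the function I₁ − I₂ is concave on [0,1]; hence it equals its upper concave envelope on [0,1]. -/

import Mathlib

open Real Set

theorem less_noisy_concave (s₁ s₂ α : ℝ) (h1 : 0 < s₁) (h12 : s₁ ≤ s₂)
    (hα : (1 + s₁) / (1 + s₂) ≤ α) :
    ConcaveOn ℝ (Icc (0:ℝ) 1) (fun q : ℝ =>
      α * (-(q + s₁) * Real.log (q + s₁) + q * (1 + s₁) * Real.log (1 + s₁)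
        + (1 - q) * s₁ * Real.log s₁)
      - (-(q + s₂) * Real.log (q + s₂) + q * (1 + s₂) * Real.log (1 + s₂)
        + (1 - q) * s₂ * Real.log s₂)) ∧
    ∀ q ∈ Icc (0:ℝ) 1,
      (α * (-(q + s₁) * Real.log (q + s₁) + q * (1 + s₁) * Real.log (1 + s₁)
        + (1 - q) * s₁ * Real.log s₁)
      - (-(q + s₂) * Real.log (q + s₂) + q * (1 + s₂) * Real.log (1 + s₂)
        + (1 - q) * s₂ * Real.log s₂)) =
      sInf {y : ℝ | ∃ g : ℝ → ℝ, ConcaveOn ℝ (Icc (0:ℝ) 1) g ∧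
        (∀ x ∈ Icc (0:ℝ) 1,
          (α * (-(x + s₁) * Real.log (x + s₁) + x * (1 + s₁) * Real.log (1 + s₁)
            + (1 - x) * s₁ * Real.log s₁)
          - (-(x + s₂) * Real.log (x + s₂) + x * (1 + s₂) * Real.log (1 + s₂)
            + (1 - x) * s₂ * Real.log s₂)) ≤ g x) ∧ y = g q} := by
  have h2 : (0:ℝ) < s₂ := lt_of_lt_of_le h1 h12
  have hs2 : (0:ℝ) < 1 + s₂ := by linarith
  have hα' : 1 + s₁ ≤ α * (1 + s₂) := by
    rwa [div_le_iff₀ hs2] at hα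
  set F : ℝ → ℝ := fun q : ℝ =>
      α * (-(q + s₁) * Real.log (q + s₁) + q * (1 + s₁) * Real.log (1 + s₁)
        + (1 - q) * s₁ * Real.log s₁)
      - (-(q + s₂) * Real.log (q + s₂) + q * (1 + s₂) * Real.log (1 + s₂)
        + (1 - q) * s₂ * Real.log s₂) with hF
  have hint : interior (Icc (0:ℝ) 1) = Ioo (0:ℝ) 1 := interior_Icc
  -- continuity
  have hcont : ContinuousOn F (Icc (0:ℝ) 1) := by
    have hq : ContinuousOn (fun x : ℝ => x) (Icc (0:ℝ) 1) := continuous_id.continuousOn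
    have hlog1 : ContinuousOn (fun q : ℝ => Real.log (q + s₁)) (Icc (0:ℝ) 1) :=
      ContinuousOn.log (hq.add continuousOn_const)
        (fun x hx => by have := hx.1; positivity)
    have hlog2 : ContinuousOn (fun q : ℝ => Real.log (q + s₂)) (Icc (0:ℝ) 1) :=
      ContinuousOn.log (hq.add continuousOn_const)
        (fun x hx => by have := hx.1; positivity)
    apply ContinuousOn.sub
    · exact continuousOn_const.mul ((((hq.add continuousOn_const).neg.mul
        hlog1).add ((hq.mul continuousOn_const).mul continuousOn_const)).add
        (((continuousOn_const.sub hq).mul continuousOn_const).mul continuousOn_const))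
    · exact (((hq.add continuousOn_const).neg.mul hlog2).add
        ((hq.mul continuousOn_const).mul continuousOn_const)).add
        (((continuousOn_const.sub hq).mul continuousOn_const).mul continuousOn_const)
  set F' : ℝ → ℝ := fun x =>
      α * (-Real.log (x + s₁) - 1 + (1 + s₁) * Real.log (1 + s₁) - s₁ * Real.log s₁)
      - (-Real.log (x + s₂) - 1 + (1 + s₂) * Real.log (1 + s₂) - s₂ * Real.log s₂) with hF'
  set F'' : ℝ → ℝ := fun x => α * (-(x + s₁)⁻¹) + (x + s₂)⁻¹ with hF''
  have hd1 : ∀ x ∈ interior (Icc (0:ℝ) 1), HasDerivAt F (F' x) x := by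
    intro x hx
    rw [hint] at hx
    have hx1 : (0:ℝ) < x + s₁ := by have := hx.1; positivity
    have hx2 : (0:ℝ) < x + s₂ := by have := hx.1; positivity
    have hid : HasDerivAt (fun q : ℝ => q + s₁) 1 x := (hasDerivAt_id x).add_const s₁
    have hid2 : HasDerivAt (fun q : ℝ => q + s₂) 1 x := (hasDerivAt_id x).add_const s₂
    have hl1 : HasDerivAt (fun q : ℝ => Real.log (q + s₁)) (1 / (x + s₁)) x := by
      simpa using hid.log hx1.ne'
    have hl2 : HasDerivAt (fun q : ℝ => Real.log (q + s₂)) (1 / (x + s₂)) x := by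
      simpa using hid2.log hx2.ne'
    have ht1 : HasDerivAt (fun q : ℝ => -(q + s₁) * Real.log (q + s₁))
        ((-1) * Real.log (x + s₁) + (-(x + s₁)) * (1 / (x + s₁))) x :=
      (hid.neg).mul hl1
    have ht2 : HasDerivAt (fun q : ℝ => -(q + s₂) * Real.log (q + s₂))
        ((-1) * Real.log (x + s₂) + (-(x + s₂)) * (1 / (x + s₂))) x :=
      (hid2.neg).mul hl2
    have hl3 : HasDerivAt (fun q : ℝ => q * (1 + s₁) * Real.log (1 + s₁))
        ((1 + s₁) * Real.log (1 + s₁)) x := by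
      simpa [mul_assoc] using
        (hasDerivAt_id x).mul_const ((1 + s₁) * Real.log (1 + s₁))
    have hl4 : HasDerivAt (fun q : ℝ => q * (1 + s₂) * Real.log (1 + s₂))
        ((1 + s₂) * Real.log (1 + s₂)) x := by
      simpa [mul_assoc] using
        (hasDerivAt_id x).mul_const ((1 + s₂) * Real.log (1 + s₂))
    have hl5 : HasDerivAt (fun q : ℝ => (1 - q) * s₁ * Real.log s₁)
        (-(s₁ * Real.log s₁)) x := by
      have := ((hasDerivAt_id x).const_sub 1).mul_const (s₁ * Real.log s₁)
      simpa [mul_assoc, neg_mul] using this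
    have hl6 : HasDerivAt (fun q : ℝ => (1 - q) * s₂ * Real.log s₂)
        (-(s₂ * Real.log s₂)) x := by
      have := ((hasDerivAt_id x).const_sub 1).mul_const (s₂ * Real.log s₂)
      simpa [mul_assoc, neg_mul] using this
    have h := (((ht1.add hl3).add hl5).const_mul α).sub ((ht2.add hl4).add hl6)
    refine h.congr_deriv ?_
    simp only [hF']
    field_simp
    ring
  have hd2 : ∀ x ∈ interior (Icc (0:ℝ) 1), HasDerivAt F' (F'' x) x := by
    intro x hx
    rw [hint] at hx
    have hx1 : (0:ℝ) < x + s₁ := by have := hx.1; positivity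
    have hx2 : (0:ℝ) < x + s₂ := by have := hx.1; positivity
    have hl1 : HasDerivAt (fun q : ℝ => Real.log (q + s₁)) (1 / (x + s₁)) x := by
      simpa using ((hasDerivAt_id x).add_const s₁).log hx1.ne'
    have hl2 : HasDerivAt (fun q : ℝ => Real.log (q + s₂)) (1 / (x + s₂)) x := by
      simpa using ((hasDerivAt_id x).add_const s₂).log hx2.ne'
    have h := ((((hl1.neg.sub_const 1).add_const ((1 + s₁) * Real.log (1 + s₁))).sub_const
      (s₁ * Real.log s₁)).const_mul α).sub
      (((hl2.neg.sub_const 1).add_const ((1 + s₂) * Real.log (1 + s₂))).sub_const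
      (s₂ * Real.log s₂))
    refine h.congr_deriv ?_
    simp only [hF'']
    field_simp
    ring
  have hneg : ∀ x ∈ interior (Icc (0:ℝ) 1), F'' x ≤ 0 := by
    intro x hx
    rw [hint] at hx
    have hx0 := hx.1
    have hx1lt := hx.2
    have hx1 : (0:ℝ) < x + s₁ := by positivity
    have hx2 : (0:ℝ) < x + s₂ := by positivity
    have key : x + s₁ ≤ α * (x + s₂) := by nlinarith [mul_pos hx2 hs2]
    simp only [hF'']
    rw [← sub_nonpos] at key ⊢
    have : α * (-(x + s₁)⁻¹) + (x + s₂)⁻¹ =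
        ((x + s₁) - α * (x + s₂)) / ((x + s₁) * (x + s₂)) := by
      field_simp
      ring
    rw [this, sub_zero]
    exact div_nonpos_of_nonpos_of_nonneg key (le_of_lt (mul_pos hx1 hx2))
  have hconc : ConcaveOn ℝ (Icc (0:ℝ) 1) F :=
    concaveOn_of_hasDerivWithinAt2_nonpos (convex_Icc 0 1) hcont
      (fun x hx => (hd1 x hx).hasDerivWithinAt)
      (fun x hx => (hd2 x hx).hasDerivWithinAt) hneg
  refine ⟨hconc, fun q hq => ?_⟩
  have hmem : F q ∈ {y : ℝ | ∃ g : ℝ → ℝ, ConcaveOn ℝ (Icc (0:ℝ) 1) g ∧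
      (∀ x ∈ Icc (0:ℝ) 1, F x ≤ g x) ∧ y = g q} :=
    ⟨F, hconc, fun x _ => le_refl _, rfl⟩
  have hlb : ∀ y ∈ {y : ℝ | ∃ g : ℝ → ℝ, ConcaveOn ℝ (Icc (0:ℝ) 1) g ∧
      (∀ x ∈ Icc (0:ℝ) 1, F x ≤ g x) ∧ y = g q}, F q ≤ y := by
    rintro y ⟨g, _, hge, rfl⟩
    exact hge q hq
  exact le_antisymm (le_csInf ⟨F q, hmem⟩ hlb) (csInf_le ⟨F q, hlb⟩ hmem)
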